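/- For δ ∈ [0, 1/λ₁) set τ*(δ) := R_Π(p*(δ), δ), let R_V⁺(τ, δ) := sup{ R_V(p, δ) : p ∈ ℝⁿ, Π(p, δ) ≥ τ·Π(p^ur, δ) } (the supremum is finite for every τ ≤ 1 since the constraint set is compact), and define Gap(δ) := R_V⁺(τ*(δ), δ) − R_V(p*(δ), δ). Suppose there exists p̃ ∈ K with ⟨w₁, p̃⟩ = ⟨w₁, p^ur⟩ (the regulation is neutral in the limit). Then Gap(δ) ≥ 0 for all δ, and Gap(δ) → 0 as δ tends to 1/λ₁ from the left. -/

import Mathlib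

open Matrix

noncomputable def Hmat {n : ℕ} (G : Matrix (Fin n) (Fin n) ℝ) (δ : ℝ) :
    Matrix (Fin n) (Fin n) ℝ :=
  (1 - δ • G)⁻¹

/-- Monopolist profit Π(p) = (p − c)ᵀ H (a − p). -/
noncomputable def profit {n : ℕ} (G : Matrix (Fin n) (Fin n) ℝ) (δ : ℝ)
    (a c p : Fin n → ℝ) : ℝ :=
  (p - c) ⬝ᵥ (Hmat G δ *ᵥ (a - p))

/-- Aggregate consumer surplus V(p) = (1/2)(a − p)ᵀ H² (a − p). -/
noncomputable def surplus {n : ℕ} (G : Matrix (Fin n) (Fin n) ℝ) (δ : ℝ)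
    (a p : Fin n → ℝ) : ℝ :=
  (1 / 2 : ℝ) * ((a - p) ⬝ᵥ ((Hmat G δ * Hmat G δ) *ᵥ (a - p)))

/-- Unrestricted optimal price p^ur = (a + c)/2. -/
noncomputable def pUR {n : ℕ} (a c : Fin n → ℝ) : Fin n → ℝ :=
  (1 / 2 : ℝ) • (a + c)

/-- The Pareto price family 𝕡(η). -/
noncomputable def pFam {n : ℕ} (G : Matrix (Fin n) (Fin n) ℝ) (δ : ℝ)
    (a c : Fin n → ℝ) (η : ℝ) : Fin n → ℝ :=
  pUR a c - (η / (2 - η)) • ((1 - (2 * δ / (2 - η)) • G)⁻¹ *ᵥ ((1 / 2 : ℝ) • (a - c)))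

/-- The all-ones vector 𝟙. -/
def onesVec (n : ℕ) : Fin n → ℝ := fun _ => 1

/-- The sufficient statistic 𝒜(p) = ⟨w₁, p − p^ur⟩ / ⟨w₁, (a−c)/2⟩. -/
noncomputable def AAstat {n : ℕ} (w1 a c p : Fin n → ℝ) : ℝ :=
  (w1 ⬝ᵥ (p - pUR a c)) / (w1 ⬝ᵥ ((1 / 2 : ℝ) • (a - c)))

/-- Profit ratio R_Π(p, δ). -/
noncomputable def Rpi {n : ℕ} (G : Matrix (Fin n) (Fin n) ℝ) (δ : ℝ)
    (a c p : Fin n → ℝ) : ℝ :=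
  profit G δ a c p / profit G δ a c (pUR a c)

/-- Consumer-surplus ratio R_V(p, δ). -/
noncomputable def Rv {n : ℕ} (G : Matrix (Fin n) (Fin n) ℝ) (δ : ℝ)
    (a c p : Fin n → ℝ) : ℝ :=
  surplus G δ a p / surplus G δ a (pUR a c)

/-- R_V⁺(τ, δ): the best consumer-surplus ratio subject to the profit floor Π(p) ≥ τ·Π(p^ur). -/
noncomputable def RVplus {n : ℕ} (G : Matrix (Fin n) (Fin n) ℝ) (δ : ℝ)
    (a c : Fin n → ℝ) (τ : ℝ) : ℝ :=
  sSup {x : ℝ | ∃ p : Fin n → ℝ,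
    τ * profit G δ a c (pUR a c) ≤ profit G δ a c p ∧ Rv G δ a c p = x}

/-- Gap(δ) = R_V⁺(τ*(δ), δ) − R_V(p*(δ), δ) with τ*(δ) = R_Π(p*(δ), δ). -/
noncomputable def Gap {n : ℕ} (G : Matrix (Fin n) (Fin n) ℝ) (δ : ℝ)
    (a c : Fin n → ℝ) (pstar : ℝ → Fin n → ℝ) : ℝ :=
  RVplus G δ a c (Rpi G δ a c (pstar δ)) - Rv G δ a c (pstar δ)


section auxlemmas
open Matrix
variable {n : ℕ}

lemma quadform (W : Matrix (Fin n) (Fin n) ℝ) (d : Fin n → ℝ) (u v : Fin n → ℝ) :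
    u ⬝ᵥ ((Wᵀ * Matrix.diagonal d * W) *ᵥ v)
      = ∑ i, d i * ((W *ᵥ u) i) * ((W *ᵥ v) i) := by
  rw [← mulVec_mulVec, ← mulVec_mulVec, dotProduct_mulVec, vecMul_transpose]
  simp only [dotProduct, mulVec_diagonal]
  exact Finset.sum_congr rfl fun i _ => by ring

lemma sandwich_mul (W : Matrix (Fin n) (Fin n) ℝ) (h : W * Wᵀ = 1) (d e : Fin n → ℝ) :
    (Wᵀ * diagonal d * W) * (Wᵀ * diagonal e * W)
      = Wᵀ * diagonal (fun i => d i * e i) * W := by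
  have : (Wᵀ * diagonal d * W) * (Wᵀ * diagonal e * W)
      = Wᵀ * (diagonal d * (W * Wᵀ) * diagonal e) * W := by
    simp only [Matrix.mul_assoc]
  rw [this, h, Matrix.mul_one, diagonal_mul_diagonal]

lemma sandwich_inv (W : Matrix (Fin n) (Fin n) ℝ) (h : W * Wᵀ = 1) (d : Fin n → ℝ)
    (hd : ∀ i, d i ≠ 0) :
    (Wᵀ * diagonal d * W)⁻¹ = Wᵀ * diagonal (fun i => (d i)⁻¹) * W := by
  apply inv_eq_right_inv
  rw [sandwich_mul W h]
  have : (fun i => d i * (d i)⁻¹) = fun _ => (1:ℝ) := by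
    funext i; exact mul_inv_cancel₀ (hd i)
  rw [this, diagonal_one, Matrix.mul_one, mul_eq_one_comm.mp h]

lemma Gdecomp (G : Matrix (Fin n) (Fin n) ℝ)
    (w : Fin n → Fin n → ℝ) (lam : Fin n → ℝ)
    (horth : ∀ i j, w i ⬝ᵥ w j = if i = j then (1 : ℝ) else 0)
    (heig : ∀ i, G *ᵥ w i = lam i • w i) :
    G = (Matrix.of w)ᵀ * diagonal lam * (Matrix.of w) := by
  set W : Matrix (Fin n) (Fin n) ℝ := Matrix.of w with hWdef
  have hW1 : W * Wᵀ = 1 := by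
    ext i j
    simpa [hWdef, Matrix.mul_apply, Matrix.one_apply, dotProduct] using horth i j
  have hGW : G * Wᵀ = Wᵀ * diagonal lam := by
    ext k i
    have := congrFun (heig i) k
    simp only [Matrix.mul_apply, Matrix.transpose_apply, mulVec, dotProduct,
      Pi.smul_apply, smul_eq_mul] at this ⊢
    simp only [diagonal_apply, hWdef, Matrix.of_apply]
    simp only [mul_ite, mul_zero]
    rw [Finset.sum_ite_eq' Finset.univ i (fun x => w x k * lam x)]
    simpa [mul_comm] using this
  calc G = G * (Wᵀ * W) := by rw [mul_eq_one_comm.mp hW1, Matrix.mul_one]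
    _ = (G * Wᵀ) * W := by rw [Matrix.mul_assoc]
    _ = Wᵀ * diagonal lam * W := by rw [hGW]

lemma oneSub_decomp (G : Matrix (Fin n) (Fin n) ℝ)
    (w : Fin n → Fin n → ℝ) (lam : Fin n → ℝ)
    (horth : ∀ i j, w i ⬝ᵥ w j = if i = j then (1 : ℝ) else 0)
    (heig : ∀ i, G *ᵥ w i = lam i • w i) (δ : ℝ) :
    (1 : Matrix (Fin n) (Fin n) ℝ) - δ • G
      = (Matrix.of w)ᵀ * diagonal (fun i => 1 - δ * lam i) * (Matrix.of w) := by
  set W : Matrix (Fin n) (Fin n) ℝ := Matrix.of w with hWdef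
  have hW1 : W * Wᵀ = 1 := by
    ext i j
    simpa [hWdef, Matrix.mul_apply, Matrix.one_apply, dotProduct] using horth i j
  have hdd : diagonal (fun i => 1 - δ * lam i)
      = (1 : Matrix (Fin n) (Fin n) ℝ) - δ • diagonal lam := by
    rw [← diagonal_one, ← diagonal_smul, ← diagonal_sub]
    rfl
  rw [hdd, Matrix.mul_sub, Matrix.sub_mul, Matrix.mul_one, mul_eq_one_comm.mp hW1,
    Matrix.mul_smul, Matrix.smul_mul, ← Gdecomp G w lam horth heig]

lemma Hmat_decomp (G : Matrix (Fin n) (Fin n) ℝ)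
    (w : Fin n → Fin n → ℝ) (lam : Fin n → ℝ)
    (horth : ∀ i j, w i ⬝ᵥ w j = if i = j then (1 : ℝ) else 0)
    (heig : ∀ i, G *ᵥ w i = lam i • w i) (δ : ℝ)
    (hne : ∀ i, 1 - δ * lam i ≠ 0) :
    Hmat G δ = (Matrix.of w)ᵀ * diagonal (fun i => (1 - δ * lam i)⁻¹) * (Matrix.of w) := by
  have hW1 : (Matrix.of w) * (Matrix.of w)ᵀ = 1 := by
    ext i j
    simpa [Matrix.mul_apply, Matrix.one_apply, dotProduct] using horth i j
  rw [Hmat, oneSub_decomp G w lam horth heig δ, sandwich_inv _ hW1 _ hne]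

lemma quad_H (G : Matrix (Fin n) (Fin n) ℝ)
    (w : Fin n → Fin n → ℝ) (lam : Fin n → ℝ)
    (horth : ∀ i j, w i ⬝ᵥ w j = if i = j then (1 : ℝ) else 0)
    (heig : ∀ i, G *ᵥ w i = lam i • w i) (δ : ℝ)
    (hne : ∀ i, 1 - δ * lam i ≠ 0) (u v : Fin n → ℝ) :
    u ⬝ᵥ (Hmat G δ *ᵥ v) = ∑ i, (1 - δ * lam i)⁻¹ * (w i ⬝ᵥ u) * (w i ⬝ᵥ v) := by
  rw [Hmat_decomp G w lam horth heig δ hne, quadform]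
  rfl

lemma quad_H2 (G : Matrix (Fin n) (Fin n) ℝ)
    (w : Fin n → Fin n → ℝ) (lam : Fin n → ℝ)
    (horth : ∀ i j, w i ⬝ᵥ w j = if i = j then (1 : ℝ) else 0)
    (heig : ∀ i, G *ᵥ w i = lam i • w i) (δ : ℝ)
    (hne : ∀ i, 1 - δ * lam i ≠ 0) (u v : Fin n → ℝ) :
    u ⬝ᵥ ((Hmat G δ * Hmat G δ) *ᵥ v)
      = ∑ i, ((1 - δ * lam i)⁻¹)^2 * (w i ⬝ᵥ u) * (w i ⬝ᵥ v) := by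
  have hW1 : (Matrix.of w) * (Matrix.of w)ᵀ = 1 := by
    ext i j
    simpa [Matrix.mul_apply, Matrix.one_apply, dotProduct] using horth i j
  rw [Hmat_decomp G w lam horth heig δ hne, sandwich_mul _ hW1, quadform]
  simp only [sq]
  rfl

lemma pc_eq (a c p : Fin n → ℝ) :
    p - c = ((1/2:ℝ) • (a - c)) + (p - pUR a c) := by
  funext k; simp [pUR, Pi.smul_apply, smul_eq_mul]; ring

lemma ap_eq (a c p : Fin n → ℝ) :
    a - p = ((1/2:ℝ) • (a - c)) - (p - pUR a c) := by
  funext k; simp [pUR, Pi.smul_apply, smul_eq_mul]; ring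

lemma profit_formula (G : Matrix (Fin n) (Fin n) ℝ)
    (w : Fin n → Fin n → ℝ) (lam : Fin n → ℝ)
    (horth : ∀ i j, w i ⬝ᵥ w j = if i = j then (1 : ℝ) else 0)
    (heig : ∀ i, G *ᵥ w i = lam i • w i) (δ : ℝ)
    (hne : ∀ i, 1 - δ * lam i ≠ 0) (a c p : Fin n → ℝ) :
    profit G δ a c p = ∑ i, (1 - δ * lam i)⁻¹ *
      ((w i ⬝ᵥ ((1/2:ℝ) • (a - c)))^2 - (w i ⬝ᵥ (p - pUR a c))^2) := by
  rw [profit, pc_eq a c p, ap_eq a c p, quad_H G w lam horth heig δ hne]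
  refine Finset.sum_congr rfl fun i _ => ?_
  simp only [dotProduct_add, dotProduct_sub]
  ring

lemma surplus_formula (G : Matrix (Fin n) (Fin n) ℝ)
    (w : Fin n → Fin n → ℝ) (lam : Fin n → ℝ)
    (horth : ∀ i j, w i ⬝ᵥ w j = if i = j then (1 : ℝ) else 0)
    (heig : ∀ i, G *ᵥ w i = lam i • w i) (δ : ℝ)
    (hne : ∀ i, 1 - δ * lam i ≠ 0) (a c p : Fin n → ℝ) :
    surplus G δ a p = (1/2:ℝ) * ∑ i, ((1 - δ * lam i)⁻¹)^2 *
      ((w i ⬝ᵥ ((1/2:ℝ) • (a - c))) - (w i ⬝ᵥ (p - pUR a c)))^2 := by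
  rw [surplus, ap_eq a c p, quad_H2 G w lam horth heig δ hne]
  congr 1
  refine Finset.sum_congr rfl fun i _ => ?_
  simp only [dotProduct_add, dotProduct_sub]
  ring

end auxlemmas

noncomputable def mco {n : ℕ} (w : Fin n → Fin n → ℝ) (a c : Fin n → ℝ) (i : Fin n) : ℝ :=
  w i ⬝ᵥ ((1/2:ℝ) • (a - c))

noncomputable def xco {n : ℕ} (w : Fin n → Fin n → ℝ) (a c p : Fin n → ℝ) (i : Fin n) : ℝ :=
  w i ⬝ᵥ (p - pUR a c)

section auxlemmas2
open Matrix
variable {n : ℕ}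

lemma profit_formula' (G : Matrix (Fin n) (Fin n) ℝ)
    (w : Fin n → Fin n → ℝ) (lam : Fin n → ℝ)
    (horth : ∀ i j, w i ⬝ᵥ w j = if i = j then (1 : ℝ) else 0)
    (heig : ∀ i, G *ᵥ w i = lam i • w i) (δ : ℝ)
    (hne : ∀ i, 1 - δ * lam i ≠ 0) (a c p : Fin n → ℝ) :
    profit G δ a c p = (∑ i, (1 - δ * lam i)⁻¹ * (mco w a c i)^2)
      - ∑ i, (1 - δ * lam i)⁻¹ * (xco w a c p i)^2 := by
  rw [profit_formula G w lam horth heig δ hne a c p, ← Finset.sum_sub_distrib]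
  exact Finset.sum_congr rfl fun i _ => by rw [mco, xco]; ring

lemma xco_pur (w : Fin n → Fin n → ℝ) (a c : Fin n → ℝ) (i : Fin n) :
    xco w a c (pUR a c) i = 0 := by
  rw [xco]; simp

lemma profit_pur (G : Matrix (Fin n) (Fin n) ℝ)
    (w : Fin n → Fin n → ℝ) (lam : Fin n → ℝ)
    (horth : ∀ i j, w i ⬝ᵥ w j = if i = j then (1 : ℝ) else 0)
    (heig : ∀ i, G *ᵥ w i = lam i • w i) (δ : ℝ)
    (hne : ∀ i, 1 - δ * lam i ≠ 0) (a c : Fin n → ℝ) :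
    profit G δ a c (pUR a c) = ∑ i, (1 - δ * lam i)⁻¹ * (mco w a c i)^2 := by
  rw [profit_formula' G w lam horth heig δ hne a c (pUR a c)]
  simp [xco_pur]

lemma surplus_formula' (G : Matrix (Fin n) (Fin n) ℝ)
    (w : Fin n → Fin n → ℝ) (lam : Fin n → ℝ)
    (horth : ∀ i j, w i ⬝ᵥ w j = if i = j then (1 : ℝ) else 0)
    (heig : ∀ i, G *ᵥ w i = lam i • w i) (δ : ℝ)
    (hne : ∀ i, 1 - δ * lam i ≠ 0) (a c p : Fin n → ℝ) :
    surplus G δ a p = (1/2:ℝ) * ∑ i, ((1 - δ * lam i)⁻¹)^2 *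
      (mco w a c i - xco w a c p i)^2 := by
  rw [surplus_formula G w lam horth heig δ hne a c p]
  rfl

lemma surplus_pur (G : Matrix (Fin n) (Fin n) ℝ)
    (w : Fin n → Fin n → ℝ) (lam : Fin n → ℝ)
    (horth : ∀ i j, w i ⬝ᵥ w j = if i = j then (1 : ℝ) else 0)
    (heig : ∀ i, G *ᵥ w i = lam i • w i) (δ : ℝ)
    (hne : ∀ i, 1 - δ * lam i ≠ 0) (a c : Fin n → ℝ) :
    surplus G δ a (pUR a c) = (1/2:ℝ) * ∑ i, ((1 - δ * lam i)⁻¹)^2 *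
      (mco w a c i)^2 := by
  rw [surplus_formula' G w lam horth heig δ hne a c (pUR a c)]
  simp [xco_pur]

end auxlemmas2

set_option maxHeartbeats 1600000 in
theorem stmt11 {n : ℕ} [NeZero n]
    (G : Matrix (Fin n) (Fin n) ℝ) (hGsym : G.IsSymm)
    (hGnn : ∀ i j, 0 ≤ G i j) (hGdiag : ∀ i, G i i = 0)
    (w : Fin n → Fin n → ℝ) (lam : Fin n → ℝ)
    (horth : ∀ i j, w i ⬝ᵥ w j = if i = j then (1 : ℝ) else 0)
    (heig : ∀ i, G *ᵥ w i = lam i • w i)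
    (hgap : ∀ i, i ≠ 0 → lam i < lam 0)
    (hlam0 : 0 < lam 0)
    (hw0 : ∀ k, 0 < w 0 k)
    (hpd : ∀ δ ∈ Set.Ico (0 : ℝ) (1 / lam 0), (Hmat G δ).PosDef)
    (a c : Fin n → ℝ) (hac : ∀ i, c i < a i)
    (K : Set (Fin n → ℝ)) (hKne : K.Nonempty) (hKcl : IsClosed K) (hKconv : Convex ℝ K)
    (pstar : ℝ → Fin n → ℝ)
    (hps : ∀ δ ∈ Set.Ico (0 : ℝ) (1 / lam 0),
      pstar δ ∈ K ∧ ∀ q ∈ K, profit G δ a c q ≤ profit G δ a c (pstar δ))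
    (hneutral : ∃ pt ∈ K, w 0 ⬝ᵥ pt = w 0 ⬝ᵥ pUR a c) :
    (∀ δ ∈ Set.Ico (0 : ℝ) (1 / lam 0), 0 ≤ Gap G δ a c pstar) ∧
    Filter.Tendsto (fun δ : ℝ => Gap G δ a c pstar)
      (nhdsWithin (1 / lam 0) (Set.Ico 0 (1 / lam 0))) (nhds 0) := by
  classical
  obtain ⟨pt, hptK, hpt0⟩ := hneutral
  have hFin : (Finset.univ : Finset (Fin n)).Nonempty := ⟨0, Finset.mem_univ 0⟩
  set I := Set.Ico (0:ℝ) (1 / lam 0) with hIdef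
  -- positivity of 1 - δ λ_i
  have hlam_le : ∀ i, lam i ≤ lam 0 := by
    intro i
    by_cases h : i = 0
    · rw [h]
    · exact (hgap i h).le
  have hne : ∀ δ ∈ I, ∀ i, (0:ℝ) < 1 - δ * lam i := by
    rintro δ ⟨hδ0, hδ1⟩ i
    have h1 : δ * lam 0 < 1 := by
      have := (lt_div_iff₀ hlam0).mp hδ1
      linarith
    have h2 : δ * lam i ≤ δ * lam 0 := mul_le_mul_of_nonneg_left (hlam_le i) hδ0
    linarith
  have hnz : ∀ δ ∈ I, ∀ i, (1:ℝ) - δ * lam i ≠ 0 := fun δ hδ i => (hne δ hδ i).ne'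
  -- uniform lower bound γ for the non-principal directions
  obtain ⟨γ, hγ0, hγ⟩ : ∃ γ : ℝ, 0 < γ ∧ ∀ δ ∈ I, ∀ i, i ≠ 0 → γ ≤ 1 - δ * lam i := by
    refine ⟨Finset.univ.inf' hFin (fun i => if i = 0 then 1 else min 1 (1 - lam i / lam 0)),
      ?_, ?_⟩
    · rw [Finset.lt_inf'_iff]
      intro i _
      by_cases h : i = 0
      · simp [h]
      · simp only [h, if_false, lt_min_iff]
        refine ⟨one_pos, ?_⟩
        have : lam i / lam 0 < 1 := (div_lt_one hlam0).mpr (hgap i h)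
        linarith
    · rintro δ ⟨hδ0, hδ1⟩ i hi
      refine le_trans (Finset.inf'_le _ (Finset.mem_univ i)) ?_
      simp only [hi, if_false]
      rcases le_or_gt (lam i) 0 with h | h
      · have h2 : δ * lam i ≤ 0 := mul_nonpos_of_nonneg_of_nonpos hδ0 h
        calc min 1 (1 - lam i / lam 0) ≤ 1 := min_le_left _ _
          _ ≤ 1 - δ * lam i := by linarith
      · have h2 : δ * lam i ≤ lam i / lam 0 := by
          calc δ * lam i ≤ (1 / lam 0) * lam i :=
                mul_le_mul_of_nonneg_right hδ1.le h.le
            _ = lam i / lam 0 := by rw [one_div, inv_mul_eq_div]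
        calc min 1 (1 - lam i / lam 0) ≤ 1 - lam i / lam 0 := min_le_right _ _
          _ ≤ 1 - δ * lam i := by linarith
  -- uniform upper bound Γ
  obtain ⟨Γ, hΓ1, hΓ⟩ : ∃ Γ : ℝ, 1 ≤ Γ ∧ ∀ δ ∈ I, ∀ i, 1 - δ * lam i ≤ Γ := by
    refine ⟨1 + (Finset.univ.sup' hFin fun i => |lam i|) / lam 0, ?_, ?_⟩
    · have h1 : (0:ℝ) ≤ (Finset.univ.sup' hFin fun i => |lam i|) :=
        le_trans (abs_nonneg (lam 0)) (Finset.le_sup' (fun i => |lam i|) (Finset.mem_univ 0))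
      have := div_nonneg h1 hlam0.le
      linarith
    · rintro δ ⟨hδ0, hδ1⟩ i
      have h1 : -(δ * lam i) ≤ δ * |lam i| := by
        have := neg_abs_le (lam i)
        nlinarith
      have h2 : δ * |lam i| ≤ (1 / lam 0) * |lam i| :=
        mul_le_mul_of_nonneg_right hδ1.le (abs_nonneg _)
      have h3 : (1 / lam 0) * |lam i| ≤ (1 / lam 0) * (Finset.univ.sup' hFin fun j => |lam j|) :=
        mul_le_mul_of_nonneg_left (Finset.le_sup' (fun j => |lam j|) (Finset.mem_univ i))
          (by positivity)
      have h4 : (1 / lam 0) * (Finset.univ.sup' hFin fun j => |lam j|)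
          = (Finset.univ.sup' hFin fun j => |lam j|) / lam 0 := by
        rw [one_div, inv_mul_eq_div]
      nlinarith
  have hΓ0 : (0:ℝ) < Γ := lt_of_lt_of_le one_pos hΓ1
  -- coordinates
  have hμpos : 0 < mco w a c 0 := by
    rw [mco]
    have : ∀ k, w 0 k * ((1/2:ℝ) • (a - c)) k > 0 := by
      intro k
      have := hac k
      have h2 : (0:ℝ) < ((1/2:ℝ) • (a - c)) k := by
        simp only [Pi.smul_apply, Pi.sub_apply, smul_eq_mul]
        linarith
      exact mul_pos (hw0 k) h2
    exact Finset.sum_pos (fun k _ => this k) hFin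
  set μ := mco w a c 0 with hμdef
  set M := ∑ i, (mco w a c i)^2 with hMdef
  set B₀ := γ⁻¹ * ∑ i, (xco w a c pt i)^2 with hB₀def
  have hB₀nn : 0 ≤ B₀ := by
    rw [hB₀def]
    positivity
  set C₂ := γ⁻¹ * γ⁻¹ * (2*M + 2*(Γ*B₀)) with hC₂def
  set C₃ := γ⁻¹ * γ⁻¹ * M with hC₃def
  have hMnn : 0 ≤ M := by rw [hMdef]; positivity
  have hC₂nn : 0 ≤ C₂ := by
    rw [hC₂def]
    have : 0 ≤ Γ * B₀ := mul_nonneg hΓ0.le hB₀nn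
    positivity
  have hC₃nn : 0 ≤ C₃ := by rw [hC₃def]; positivity
  set U : ℝ → ℝ := fun δ =>
    ((μ + Real.sqrt (B₀*(1-δ*lam 0)))^2 + C₂*(1-δ*lam 0)^2)/μ^2 with hUdef
  set L : ℝ → ℝ := fun δ =>
    (μ - Real.sqrt (B₀*(1-δ*lam 0)))^2/(μ^2 + C₃*(1-δ*lam 0)^2) with hLdef
  -- the neutral point has small H-energy
  have hxpt0 : xco w a c pt 0 = 0 := by
    rw [xco, dotProduct_sub, hpt0, sub_self]
  have hQpt : ∀ δ ∈ I, ∑ i, (1-δ*lam i)⁻¹*(xco w a c pt i)^2 ≤ B₀ := by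
    intro δ hδ
    rw [hB₀def, Finset.mul_sum]
    refine Finset.sum_le_sum fun i _ => ?_
    by_cases h : i = 0
    · rw [h, hxpt0]
      simp
    · exact mul_le_mul_of_nonneg_right
        (inv_anti₀ hγ0 (hγ δ hδ i h)) (sq_nonneg _)
  -- profit floor implies H-energy bound
  have hQbound : ∀ δ ∈ I, ∀ p : Fin n → ℝ,
      profit G δ a c (pstar δ) ≤ profit G δ a c p →
      ∑ i, (1-δ*lam i)⁻¹*(xco w a c p i)^2 ≤ B₀ := by
    intro δ hδ p hp
    have hp' : profit G δ a c pt ≤ profit G δ a c p :=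
      le_trans ((hps δ hδ).2 pt hptK) hp
    rw [profit_formula' G w lam horth heig δ (hnz δ hδ) a c pt,
      profit_formula' G w lam horth heig δ (hnz δ hδ) a c p] at hp'
    have := hQpt δ hδ
    linarith
  -- positivity of profit at pUR
  have hPpur_pos : ∀ δ ∈ I, 0 < profit G δ a c (pUR a c) := by
    intro δ hδ
    rw [profit_pur G w lam horth heig δ (hnz δ hδ) a c]
    refine Finset.sum_pos' (fun i _ => ?_) ⟨0, Finset.mem_univ 0, ?_⟩
    · exact mul_nonneg (inv_nonneg.mpr (hne δ hδ i).le) (sq_nonneg _)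
    · exact mul_pos (inv_pos.mpr (hne δ hδ 0)) (by positivity)
  -- upper bound for Rv under profit floor
  have hRv_up : ∀ δ ∈ I, ∀ p : Fin n → ℝ,
      profit G δ a c (pstar δ) ≤ profit G δ a c p → Rv G δ a c p ≤ U δ := by
    intro δ hδ p hp
    have hε := hne δ hδ 0
    have hQp := hQbound δ hδ p hp
    have hterms : ∀ i ∈ Finset.univ, (0:ℝ) ≤ (1-δ*lam i)⁻¹*(xco w a c p i)^2 :=
      fun i _ => mul_nonneg (inv_nonneg.mpr (hne δ hδ i).le) (sq_nonneg _)
    have hterm := le_trans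
      (Finset.single_le_sum hterms (Finset.mem_univ 0)) hQp
    have hx0 : (xco w a c p 0)^2 ≤ B₀ * (1-δ*lam 0) := by
      have h := mul_le_mul_of_nonneg_left hterm hε.le
      rw [← mul_assoc, mul_inv_cancel₀ hε.ne', one_mul] at h
      linarith
    have hxs : ∑ i, (xco w a c p i)^2 ≤ Γ * B₀ := by
      have h1 : ∀ i ∈ Finset.univ,
          (xco w a c p i)^2 ≤ Γ * ((1-δ*lam i)⁻¹ * (xco w a c p i)^2) := by
        intro i _
        have hd : Γ⁻¹ ≤ (1-δ*lam i)⁻¹ := inv_anti₀ (hne δ hδ i) (hΓ δ hδ i)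
        calc (xco w a c p i)^2 = Γ * (Γ⁻¹ * (xco w a c p i)^2) := by
              rw [← mul_assoc, mul_inv_cancel₀ hΓ0.ne', one_mul]
          _ ≤ Γ * ((1-δ*lam i)⁻¹ * (xco w a c p i)^2) :=
              mul_le_mul_of_nonneg_left
                (mul_le_mul_of_nonneg_right hd (sq_nonneg _)) hΓ0.le
      calc ∑ i, (xco w a c p i)^2
          ≤ ∑ i, Γ * ((1-δ*lam i)⁻¹ * (xco w a c p i)^2) := Finset.sum_le_sum h1
        _ = Γ * ∑ i, (1-δ*lam i)⁻¹ * (xco w a c p i)^2 := by rw [Finset.mul_sum]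
        _ ≤ Γ * B₀ := mul_le_mul_of_nonneg_left hQp hΓ0.le
    set s := Real.sqrt (B₀*(1-δ*lam 0)) with hsdef
    have hs : 0 ≤ s := Real.sqrt_nonneg _
    have hx0abs : |xco w a c p 0| ≤ s := by
      rw [← Real.sqrt_sq_eq_abs]
      refine le_trans (Real.sqrt_le_sqrt ?_) (le_of_eq rfl)
      linarith [hx0]
    have h0term : (μ - xco w a c p 0)^2 ≤ (μ + s)^2 := by
      have h1 := abs_le.mp hx0abs
      apply sq_le_sq'
      · linarith
      · linarith
    -- numerator bound
    have hNum : ∑ i, ((1-δ*lam i)⁻¹)^2*(mco w a c i - xco w a c p i)^2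
        ≤ ((1-δ*lam 0)⁻¹)^2*(μ+s)^2 + C₂ := by
      rw [← Finset.add_sum_erase _ _ (Finset.mem_univ 0)]
      refine add_le_add (mul_le_mul_of_nonneg_left h0term (by positivity)) ?_
      have hper : ∀ i ∈ Finset.univ.erase 0,
          ((1-δ*lam i)⁻¹)^2*(mco w a c i - xco w a c p i)^2
            ≤ γ⁻¹*γ⁻¹*(2*(mco w a c i)^2 + 2*(xco w a c p i)^2) := by
        intro i hi
        have hi0 : i ≠ 0 := Finset.ne_of_mem_erase hi
        have hd : (1-δ*lam i)⁻¹ ≤ γ⁻¹ := inv_anti₀ hγ0 (hγ δ hδ i hi0)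
        have hdp : (0:ℝ) < (1-δ*lam i)⁻¹ := inv_pos.mpr (hne δ hδ i)
        have hsq : (mco w a c i - xco w a c p i)^2
            ≤ 2*(mco w a c i)^2 + 2*(xco w a c p i)^2 := by
          nlinarith [sq_nonneg (mco w a c i + xco w a c p i)]
        have hdd : ((1-δ*lam i)⁻¹)^2 ≤ γ⁻¹*γ⁻¹ := by
          rw [sq]
          exact mul_le_mul hd hd hdp.le (inv_nonneg.mpr hγ0.le)
        exact mul_le_mul hdd hsq (sq_nonneg _) (by positivity)
      calc ∑ i ∈ Finset.univ.erase 0,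
            ((1-δ*lam i)⁻¹)^2*(mco w a c i - xco w a c p i)^2
          ≤ ∑ i ∈ Finset.univ.erase 0,
            γ⁻¹*γ⁻¹*(2*(mco w a c i)^2 + 2*(xco w a c p i)^2) :=
            Finset.sum_le_sum hper
        _ ≤ ∑ i, γ⁻¹*γ⁻¹*(2*(mco w a c i)^2 + 2*(xco w a c p i)^2) :=
            Finset.sum_le_sum_of_subset_of_nonneg
              (Finset.erase_subset _ _) (fun i _ _ => by positivity)
        _ = ∑ i, (γ⁻¹*γ⁻¹*2*(mco w a c i)^2 + γ⁻¹*γ⁻¹*2*(xco w a c p i)^2) :=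
            Finset.sum_congr rfl fun i _ => by ring
        _ = γ⁻¹*γ⁻¹*2*(∑ i, (mco w a c i)^2) + γ⁻¹*γ⁻¹*2*(∑ i, (xco w a c p i)^2) := by
            rw [Finset.sum_add_distrib, Finset.mul_sum, Finset.mul_sum]
        _ ≤ C₂ := by
            rw [← hMdef, hC₂def]
            have hgg : (0:ℝ) < γ⁻¹*γ⁻¹ := by positivity
            nlinarith [hxs, hgg]
    -- denominator lower bound
    have hDen_low : ((1-δ*lam 0)⁻¹)^2 * μ^2 ≤ ∑ i, ((1-δ*lam i)⁻¹)^2*(mco w a c i)^2 := by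
      rw [hμdef]
      exact Finset.single_le_sum (f := fun i => ((1-δ*lam i)⁻¹)^2*(mco w a c i)^2)
        (fun i _ => by positivity) (Finset.mem_univ 0)
    have hDpos : (0:ℝ) < ((1-δ*lam 0)⁻¹)^2 * μ^2 := by positivity
    have hRvEq : Rv G δ a c p
        = (∑ i, ((1-δ*lam i)⁻¹)^2*(mco w a c i - xco w a c p i)^2)
          / (∑ i, ((1-δ*lam i)⁻¹)^2*(mco w a c i)^2) := by
      rw [Rv, surplus_formula' G w lam horth heig δ (hnz δ hδ) a c p,
        surplus_pur G w lam horth heig δ (hnz δ hδ) a c,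
        mul_div_mul_left _ _ (by norm_num : (1/2:ℝ) ≠ 0)]
    rw [hRvEq]
    calc (∑ i, ((1-δ*lam i)⁻¹)^2*(mco w a c i - xco w a c p i)^2)
          / (∑ i, ((1-δ*lam i)⁻¹)^2*(mco w a c i)^2)
        ≤ (((1-δ*lam 0)⁻¹)^2*(μ+s)^2 + C₂) / (((1-δ*lam 0)⁻¹)^2 * μ^2) := by
          apply div_le_div₀ (by positivity) hNum hDpos hDen_low
      _ = U δ := by
          simp only [hUdef]
          have hεne : (1:ℝ)-δ*lam 0 ≠ 0 := hε.ne'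
          have hμne : μ ≠ 0 := hμpos.ne'
          rw [← hsdef, div_eq_div_iff (by positivity) (by positivity)]
          field_simp
          try ring
  -- lower bound for Rv at pstar
  have hRv_low : ∀ δ ∈ I, Real.sqrt (B₀*(1-δ*lam 0)) ≤ μ →
      L δ ≤ Rv G δ a c (pstar δ) := by
    intro δ hδ hsμ
    have hε := hne δ hδ 0
    have hQp := hQbound δ hδ (pstar δ) le_rfl
    have hterms : ∀ i ∈ Finset.univ, (0:ℝ) ≤ (1-δ*lam i)⁻¹*(xco w a c (pstar δ) i)^2 :=
      fun i _ => mul_nonneg (inv_nonneg.mpr (hne δ hδ i).le) (sq_nonneg _)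
    have hterm := le_trans (Finset.single_le_sum hterms (Finset.mem_univ 0)) hQp
    have hx0 : (xco w a c (pstar δ) 0)^2 ≤ B₀ * (1-δ*lam 0) := by
      have h := mul_le_mul_of_nonneg_left hterm hε.le
      rw [← mul_assoc, mul_inv_cancel₀ hε.ne', one_mul] at h
      linarith
    set s := Real.sqrt (B₀*(1-δ*lam 0)) with hsdef
    have hs : 0 ≤ s := Real.sqrt_nonneg _
    have hx0abs : |xco w a c (pstar δ) 0| ≤ s := by
      rw [← Real.sqrt_sq_eq_abs]
      exact Real.sqrt_le_sqrt (by linarith [hx0])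
    have h1 := abs_le.mp hx0abs
    have h0term : (μ - s)^2 ≤ (μ - xco w a c (pstar δ) 0)^2 := by
      apply pow_le_pow_left₀ (by linarith) (by linarith)
    have hNum : ((1-δ*lam 0)⁻¹)^2*(μ - s)^2
        ≤ ∑ i, ((1-δ*lam i)⁻¹)^2*(mco w a c i - xco w a c (pstar δ) i)^2 := by
      refine le_trans (mul_le_mul_of_nonneg_left h0term (by positivity)) ?_
      have h2 : (μ - xco w a c (pstar δ) 0) = mco w a c 0 - xco w a c (pstar δ) 0 := by
        rw [hμdef]
      rw [h2]
      exact Finset.single_le_sum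
        (f := fun i => ((1-δ*lam i)⁻¹)^2*(mco w a c i - xco w a c (pstar δ) i)^2)
        (fun i _ => by positivity) (Finset.mem_univ 0)
    have hDen_hi : ∑ i, ((1-δ*lam i)⁻¹)^2*(mco w a c i)^2
        ≤ ((1-δ*lam 0)⁻¹)^2*μ^2 + C₃ := by
      rw [← Finset.add_sum_erase _ _ (Finset.mem_univ 0)]
      refine add_le_add le_rfl ?_
      have hper : ∀ i ∈ Finset.univ.erase 0,
          ((1-δ*lam i)⁻¹)^2*(mco w a c i)^2 ≤ γ⁻¹*γ⁻¹*(mco w a c i)^2 := by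
        intro i hi
        have hi0 : i ≠ 0 := Finset.ne_of_mem_erase hi
        have hd : (1-δ*lam i)⁻¹ ≤ γ⁻¹ := inv_anti₀ hγ0 (hγ δ hδ i hi0)
        have hdp : (0:ℝ) < (1-δ*lam i)⁻¹ := inv_pos.mpr (hne δ hδ i)
        have hdd : ((1-δ*lam i)⁻¹)^2 ≤ γ⁻¹*γ⁻¹ := by
          rw [sq]
          exact mul_le_mul hd hd hdp.le (inv_nonneg.mpr hγ0.le)
        exact mul_le_mul_of_nonneg_right hdd (sq_nonneg _)
      calc ∑ i ∈ Finset.univ.erase 0, ((1-δ*lam i)⁻¹)^2*(mco w a c i)^2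
          ≤ ∑ i ∈ Finset.univ.erase 0, γ⁻¹*γ⁻¹*(mco w a c i)^2 :=
            Finset.sum_le_sum hper
        _ ≤ ∑ i, γ⁻¹*γ⁻¹*(mco w a c i)^2 :=
            Finset.sum_le_sum_of_subset_of_nonneg
              (Finset.erase_subset _ _) (fun i _ _ => by positivity)
        _ = C₃ := by rw [hC₃def, ← Finset.mul_sum, ← hMdef]
    have hDpos : (0:ℝ) < ∑ i, ((1-δ*lam i)⁻¹)^2*(mco w a c i)^2 :=
      lt_of_lt_of_le (by positivity) (Finset.single_le_sum
        (f := fun i => ((1-δ*lam i)⁻¹)^2*(mco w a c i)^2)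
        (fun i _ => by positivity) (Finset.mem_univ 0))
    have hRvEq : Rv G δ a c (pstar δ)
        = (∑ i, ((1-δ*lam i)⁻¹)^2*(mco w a c i - xco w a c (pstar δ) i)^2)
          / (∑ i, ((1-δ*lam i)⁻¹)^2*(mco w a c i)^2) := by
      rw [Rv, surplus_formula' G w lam horth heig δ (hnz δ hδ) a c (pstar δ),
        surplus_pur G w lam horth heig δ (hnz δ hδ) a c,
        mul_div_mul_left _ _ (by norm_num : (1/2:ℝ) ≠ 0)]
    rw [hRvEq]
    simp only [hLdef]
    have hLeq : (μ - s)^2/(μ^2 + C₃*(1-δ*lam 0)^2)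
        = (((1-δ*lam 0)⁻¹)^2*(μ - s)^2) / (((1-δ*lam 0)⁻¹)^2*μ^2 + C₃) := by
      have hεne : (1:ℝ)-δ*lam 0 ≠ 0 := hε.ne'
      rw [div_eq_div_iff (by positivity) (by positivity)]
      field_simp
      try ring
    rw [hLeq]
    apply div_le_div₀ (le_trans (by positivity) hNum) hNum hDpos hDen_hi
  -- the feasible set and its supremum
  have hconstr : ∀ δ ∈ I, ∀ p : Fin n → ℝ,
      (Rpi G δ a c (pstar δ) * profit G δ a c (pUR a c) ≤ profit G δ a c p)
        ↔ profit G δ a c (pstar δ) ≤ profit G δ a c p := by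
    intro δ hδ p
    rw [Rpi, div_mul_cancel₀ _ (hPpur_pos δ hδ).ne']
  have hSmem : ∀ δ ∈ I, Rv G δ a c (pstar δ) ∈
      {x : ℝ | ∃ p : Fin n → ℝ,
        Rpi G δ a c (pstar δ) * profit G δ a c (pUR a c) ≤ profit G δ a c p
          ∧ Rv G δ a c p = x} := by
    intro δ hδ
    exact ⟨pstar δ, (hconstr δ hδ (pstar δ)).mpr le_rfl, rfl⟩
  have hSbdd : ∀ δ ∈ I, ∀ x ∈
      {x : ℝ | ∃ p : Fin n → ℝ,
        Rpi G δ a c (pstar δ) * profit G δ a c (pUR a c) ≤ profit G δ a c p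
          ∧ Rv G δ a c p = x}, x ≤ U δ := by
    rintro δ hδ x ⟨p, hcon, rfl⟩
    exact hRv_up δ hδ p ((hconstr δ hδ p).mp hcon)
  have hGap_lb : ∀ δ ∈ I, 0 ≤ Gap G δ a c pstar := by
    intro δ hδ
    rw [Gap, sub_nonneg, RVplus]
    exact le_csSup ⟨U δ, hSbdd δ hδ⟩ (hSmem δ hδ)
  refine ⟨hGap_lb, ?_⟩
  -- limits
  have hεt : Filter.Tendsto (fun δ : ℝ => 1 - δ * lam 0)
      (nhdsWithin (1/lam 0) I) (nhds 0) := by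
    have hc : Continuous (fun δ : ℝ => 1 - δ * lam 0) := by continuity
    have h := (hc.tendsto (1/lam 0)).mono_left
      (nhdsWithin_le_nhds : nhdsWithin (1/lam 0) I ≤ nhds (1/lam 0))
    have hval : 1 - (1/lam 0) * lam 0 = (0:ℝ) := by
      field_simp
      norm_num
    rwa [hval] at h
  have hst : Filter.Tendsto (fun δ : ℝ => Real.sqrt (B₀ * (1 - δ*lam 0)))
      (nhdsWithin (1/lam 0) I) (nhds 0) := by
    have hc : Filter.Tendsto (fun t : ℝ => Real.sqrt (B₀ * t)) (nhds 0) (nhds 0) := by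
      have hc2 : Continuous (fun t : ℝ => Real.sqrt (B₀ * t)) := by
        exact Real.continuous_sqrt.comp (continuous_const.mul continuous_id)
      have h := hc2.tendsto 0
      simpa using h
    exact hc.comp hεt
  have hUt : Filter.Tendsto U (nhdsWithin (1/lam 0) I) (nhds 1) := by
    have h1 : Filter.Tendsto
        (fun δ : ℝ => ((μ + Real.sqrt (B₀*(1-δ*lam 0)))^2 + C₂*(1-δ*lam 0)^2))
        (nhdsWithin (1/lam 0) I) (nhds (μ^2)) := by
      have h := (((tendsto_const_nhds (x := μ)).add hst).pow 2).add
        ((tendsto_const_nhds (x := C₂)).mul (hεt.pow 2))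
      simpa using h
    have h2 := h1.div_const (μ^2)
    simp only [hUdef]
    have : μ^2 / μ^2 = (1:ℝ) := div_self (by positivity)
    rwa [this] at h2
  have hLt : Filter.Tendsto L (nhdsWithin (1/lam 0) I) (nhds 1) := by
    have h1 : Filter.Tendsto (fun δ : ℝ => (μ - Real.sqrt (B₀*(1-δ*lam 0)))^2)
        (nhdsWithin (1/lam 0) I) (nhds (μ^2)) := by
      have h := ((tendsto_const_nhds (x := μ)).sub hst).pow 2
      simpa using h
    have h2 : Filter.Tendsto (fun δ : ℝ => μ^2 + C₃*(1-δ*lam 0)^2)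
        (nhdsWithin (1/lam 0) I) (nhds (μ^2)) := by
      have h := (tendsto_const_nhds (x := μ^2)).add
        ((tendsto_const_nhds (x := C₃)).mul (hεt.pow 2))
      simpa using h
    have h3 := h1.div h2 (by positivity)
    simp only [hLdef]
    have : μ^2 / μ^2 = (1:ℝ) := div_self (by positivity)
    rwa [this] at h3
  have hULt : Filter.Tendsto (fun δ => U δ - L δ) (nhdsWithin (1/lam 0) I) (nhds 0) := by
    have h := hUt.sub hLt
    simpa using h
  have hevI : ∀ᶠ δ in nhdsWithin (1/lam 0) I, δ ∈ I := eventually_mem_nhdsWithin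
  have hevs : ∀ᶠ δ in nhdsWithin (1/lam 0) I, B₀*(1-δ*lam 0) < μ^2 := by
    have hB : Filter.Tendsto (fun δ : ℝ => B₀*(1-δ*lam 0))
        (nhdsWithin (1/lam 0) I) (nhds 0) := by
      have h := (tendsto_const_nhds (x := B₀)).mul hεt
      simpa using h
    exact hB.eventually_lt_const (by positivity)
  apply tendsto_of_tendsto_of_tendsto_of_le_of_le' tendsto_const_nhds hULt
  · exact hevI.mono fun δ hδ => hGap_lb δ hδ
  · filter_upwards [hevI, hevs] with δ hδ hsm
    have hs' : Real.sqrt (B₀*(1-δ*lam 0)) ≤ μ := by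
      rw [← Real.sqrt_sq hμpos.le]
      exact Real.sqrt_le_sqrt hsm.le
    have hsup : RVplus G δ a c (Rpi G δ a c (pstar δ)) ≤ U δ := by
      rw [RVplus]
      exact csSup_le ⟨_, hSmem δ hδ⟩ (hSbdd δ hδ)
    have hlow := hRv_low δ hδ hs'
    rw [Gap]
    linarith
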